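/- Let 1 ≤ p ≤ 2 and let (γ_k)_{k≥0} be a sequence of positive real numbers with γ_0 = 1. Suppose that for every analytic polynomial f(z) = ∑_{k=0}^K a_k z^k in one variable, ∑_{k=0}^K |a_k|² γ_k ≤ (∫_𝕋 |f(w)|^p dm(w))^{2/p}. Then for every d ≥ 1 and every analytic polynomial f(z₁,…,z_d) = ∑_{κ ∈ ℕ^d} a_κ z₁^{κ₁} ⋯ z_d^{κ_d} (with finitely many nonzero coefficients), one has ∑_{κ ∈ ℕ^d} |a_κ|² γ_{κ₁} ⋯ γ_{κ_d} ≤ (∫_{𝕋^d} |f(w)|^p dm_d(w))^{2/p}, where m_d is the normalized Haar measure on the d-torus 𝕋^d (the d-fold product of m). -/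

import Mathlib

open MeasureTheory

namespace Stmt4Aux

open Real Finset

noncomputable def bc : ℝ := 1 / (2 * Real.pi)

def aBox (d : ℕ) : Set (Fin d → ℝ) := Set.univ.pi fun _ => Set.Ioc (0 : ℝ) (2 * Real.pi)

noncomputable def Q {d : ℕ} (S : Finset (Fin d → ℕ)) (a : (Fin d → ℕ) → ℂ)
    (θ : Fin d → ℝ) : ℂ :=
  ∑ κ ∈ S, a κ * ∏ j, Complex.exp (Complex.I * (θ j : ℂ)) ^ κ j

lemma bc_pos : 0 < bc := by unfold bc; positivity

lemma continuous_Q {d : ℕ} (S : Finset (Fin d → ℕ)) (a : (Fin d → ℕ) → ℂ) :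
    Continuous (Q S a) := by
  apply continuous_finset_sum
  intro κ _
  apply Continuous.mul continuous_const
  apply continuous_finset_prod
  intro j _
  exact (Complex.continuous_exp.comp (by fun_prop)).pow _

lemma integrableOn_box {d : ℕ} {g : (Fin d → ℝ) → ℝ} (hg : Continuous g) :
    IntegrableOn g (aBox d) := by
  have h1 : IntegrableOn g (Set.univ.pi fun _ : Fin d => Set.Icc (0:ℝ) (2 * Real.pi)) :=
    hg.continuousOn.integrableOn_compact (isCompact_univ_pi fun _ => isCompact_Icc)
  exact h1.mono_set (Set.pi_mono fun i _ => Set.Ioc_subset_Icc_self)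

lemma weighted_sum_rpow_le {r : ℝ} (hr0 : 0 < r) (hr1 : r ≤ 1) (n : ℕ) (lam x : ℕ → ℝ)
    (hlam : ∀ k, 0 ≤ lam k) (hx : ∀ k, 0 ≤ x k)
    (hsum : ∑ k ∈ range n, lam k = 1) :
    ∑ k ∈ range n, lam k ^ (1 - r) * x k ^ r ≤ (∑ k ∈ range n, x k) ^ r := by
  set s := ∑ k ∈ range n, x k with hs
  have hs0 : 0 ≤ s := Finset.sum_nonneg fun k _ => hx k
  rcases eq_or_lt_of_le hs0 with h0 | hpos
  · -- s = 0, so all x k = 0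
    have hz : ∀ k ∈ range n, x k = 0 := by
      intro k hk
      have h2 := Finset.single_le_sum (fun k _ => hx k) hk
      have : x k ≤ 0 := by rw [h0]; exact h2
      linarith [hx k]
    have : ∑ k ∈ range n, lam k ^ (1 - r) * x k ^ r = 0 := by
      apply Finset.sum_eq_zero
      intro k hk
      rw [hz k hk, Real.zero_rpow hr0.ne', mul_zero]
    rw [this]
    exact Real.rpow_nonneg hs0 r
  · -- s > 0
    have key : ∀ k ∈ range n, lam k ^ (1 - r) * x k ^ r ≤ ((1-r) * lam k + r * (x k / s)) * s ^ r := by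
      intro k hk
      have h1 : x k ^ r = (x k / s) ^ r * s ^ r := by
        rw [Real.div_rpow (hx k) hs0, div_mul_cancel₀]
        exact (Real.rpow_pos_of_pos hpos r).ne'
      rw [h1, ← mul_assoc]
      apply mul_le_mul_of_nonneg_right _ (Real.rpow_nonneg hs0 r)
      exact Real.geom_mean_le_arith_mean2_weighted (by linarith) hr0.le (hlam k)
        (div_nonneg (hx k) hs0) (by ring)
    calc ∑ k ∈ range n, lam k ^ (1 - r) * x k ^ r
        ≤ ∑ k ∈ range n, ((1-r) * lam k + r * (x k / s)) * s ^ r :=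
          Finset.sum_le_sum key
      _ = ((1-r) * (∑ k ∈ range n, lam k) + r * (s / s)) * s ^ r := by
          rw [← Finset.sum_mul]; congr 1
          rw [Finset.sum_add_distrib, ← Finset.mul_sum, ← Finset.mul_sum, Finset.sum_div]
      _ = s ^ r := by
          rw [hsum, div_self hpos.ne', mul_one, mul_one]
          ring_nf


lemma rev_mink {Ω : Type} [MeasurableSpace Ω] (ν : Measure Ω) {r : ℝ} (hr0 : 0 < r)
    (hr1 : r ≤ 1) (n : ℕ) (G : ℕ → Ω → ℝ) (hGpos : ∀ k ω, 0 ≤ G k ω)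
    (hGint : ∀ k, Integrable (fun ω => G k ω ^ r) ν)
    (hSint : Integrable (fun ω => (∑ k ∈ range n, G k ω) ^ r) ν) :
    ∑ k ∈ range n, (∫ ω, G k ω ^ r ∂ν) ^ (1 / r) ≤
      (∫ ω, (∑ k ∈ range n, G k ω) ^ r ∂ν) ^ (1 / r) := by
  have hIpos : ∀ k, 0 ≤ ∫ ω, G k ω ^ r ∂ν := fun k =>
    integral_nonneg fun ω => Real.rpow_nonneg (hGpos k ω) r
  have hRnn : 0 ≤ ∫ ω, (∑ k ∈ range n, G k ω) ^ r ∂ν :=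
    integral_nonneg fun ω => Real.rpow_nonneg (Finset.sum_nonneg fun k _ => hGpos k ω) r
  set A : ℕ → ℝ := fun k => (∫ ω, G k ω ^ r ∂ν) ^ (1 / r) with hA
  have hAnn : ∀ k, 0 ≤ A k := fun k => Real.rpow_nonneg (hIpos k) _
  have hArI : ∀ k, A k ^ r = ∫ ω, G k ω ^ r ∂ν := by
    intro k
    simp only [hA]
    rw [← Real.rpow_mul (hIpos k), one_div, inv_mul_cancel₀ hr0.ne', Real.rpow_one]
  set T : ℝ := ∑ k ∈ range n, A k with hT
  have hTnn : 0 ≤ T := Finset.sum_nonneg fun k _ => hAnn k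
  rcases eq_or_lt_of_le hTnn with h0 | hTpos
  · rw [← h0]
    exact Real.rpow_nonneg hRnn _
  · have key : ∀ ω, ∑ k ∈ range n, (A k / T) ^ (1 - r) * G k ω ^ r ≤
        (∑ k ∈ range n, G k ω) ^ r := by
      intro ω
      apply weighted_sum_rpow_le hr0 hr1 n _ _ (fun k => div_nonneg (hAnn k) hTnn)
        (fun k => hGpos k ω)
      rw [← Finset.sum_div, ← hT, div_self hTpos.ne']
    have step : T ^ r ≤ ∫ ω, (∑ k ∈ range n, G k ω) ^ r ∂ν := by
      have e1 : T ^ r = ∑ k ∈ range n, (A k / T) ^ (1 - r) * (A k ^ r) := by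
        have : ∀ k ∈ range n, (A k / T) ^ (1 - r) * (A k ^ r) = A k * T ^ (r - 1) := by
          intro k _
          rcases eq_or_lt_of_le (hAnn k) with hA0 | hA0
          · rw [← hA0]
            rcases eq_or_lt_of_le hr1 with h | h
            · simp only [← hA0, ← h]
              simp [Real.zero_rpow hr0.ne']
            · rw [zero_div, Real.zero_rpow (by linarith), Real.zero_rpow hr0.ne',
                zero_mul, zero_mul]
          · rw [Real.div_rpow (hAnn k) hTnn, div_mul_eq_mul_div, ← Real.rpow_add hA0,
              sub_add_cancel, Real.rpow_one, show r - 1 = -(1-r) by ring,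
              Real.rpow_neg hTnn, div_eq_mul_inv]
        rw [Finset.sum_congr rfl this, ← Finset.sum_mul, ← hT]
        have : T ^ r = T ^ (1:ℝ) * T ^ (r-1) := by
          rw [← Real.rpow_add hTpos]; ring_nf
        rw [this, Real.rpow_one]
      rw [e1]
      have e2 : ∀ k ∈ range n, (A k / T) ^ (1 - r) * (A k ^ r) =
          ∫ ω, (A k / T) ^ (1 - r) * G k ω ^ r ∂ν := by
        intro k _
        rw [hArI k, integral_const_mul]
      rw [Finset.sum_congr rfl e2, ← integral_finset_sum]
      · apply integral_mono _ hSint key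
        apply integrable_finset_sum
        intro k _
        exact (hGint k).const_mul _
      · intro k _
        exact (hGint k).const_mul _
    calc T = (T ^ r) ^ (1 / r) := by
          rw [← Real.rpow_mul hTnn, mul_one_div_cancel hr0.ne', Real.rpow_one]
      _ ≤ (∫ ω, (∑ k ∈ range n, G k ω) ^ r ∂ν) ^ (1 / r) :=
          Real.rpow_le_rpow (Real.rpow_nonneg hTnn r) step (by positivity)


lemma sum_piFinset_succ {M : Type} [AddCommMonoid M] (K d : ℕ)
    (g : (Fin (d + 1) → ℕ) → M) :
    ∑ κ ∈ Fintype.piFinset (fun _ : Fin (d + 1) => range (K + 1)), g κ =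
      ∑ k ∈ range (K + 1), ∑ κ' ∈ Fintype.piFinset (fun _ : Fin d => range (K + 1)),
        g (Fin.cons k κ') := by
  rw [← Finset.sum_product']
  apply Finset.sum_nbij' (fun κ => (κ 0, Fin.tail κ)) (fun q => Fin.cons q.1 q.2)
  · intro κ hκ
    rw [Fin.mem_piFinset_iff_zero_tail] at hκ
    simp only [Finset.mem_product]
    exact ⟨hκ.1, by simpa [Fin.tail] using hκ.2⟩
  · intro q hq
    rw [Fin.mem_piFinset_iff_zero_tail]
    simp only [Finset.mem_product] at hq
    exact ⟨by simpa using hq.1, by simpa [Fin.tail] using hq.2⟩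
  · intro κ _; exact Fin.cons_self_tail κ
  · intro q _; simp
  · intro κ _; rw [Fin.cons_self_tail]


lemma preimage_box (d : ℕ) :
    (MeasurableEquiv.piFinSuccAbove (fun _ : Fin (d+1) => ℝ) 0) ⁻¹'
      ((Set.Ioc (0:ℝ) (2 * Real.pi)) ×ˢ aBox d) = aBox (d+1) := by
  ext θ
  simp only [aBox, Set.mem_preimage, MeasurableEquiv.piFinSuccAbove_apply, Set.mem_prod,
    Set.mem_pi, Set.mem_univ, forall_true_left, true_implies]
  constructor
  · rintro ⟨h0, hrest⟩ j
    rcases Fin.eq_zero_or_eq_succ j with rfl | ⟨i, rfl⟩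
    · exact h0
    · simpa [Fin.tail] using hrest i
  · intro h
    exact ⟨h 0, fun i => by simpa [Fin.tail] using h (Fin.succ i)⟩


lemma main (p : ℝ) (hp1 : 1 ≤ p) (hp2 : p ≤ 2) (γ : ℕ → ℝ)
    (hγpos : ∀ k, 0 < γ k) (hγ0 : γ 0 = 1)
    (h1 : ∀ (K : ℕ) (a : ℕ → ℂ),
      ∑ k ∈ Finset.range (K + 1), ‖a k‖ ^ 2 * γ k ≤
        ((1 / (2 * Real.pi)) * ∫ θ in (0 : ℝ)..(2 * Real.pi),
          ‖∑ k ∈ Finset.range (K + 1), a k * Complex.exp (Complex.I * (θ : ℂ)) ^ k‖ ^ p)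
          ^ (2 / p)) :
    ∀ (d : ℕ) (S : Finset (Fin d → ℕ)) (a : (Fin d → ℕ) → ℂ),
      ∑ κ ∈ S, ‖a κ‖ ^ 2 * ∏ j, γ (κ j) ≤
        (bc ^ d * ∫ θ in aBox d, ‖Q S a θ‖ ^ p) ^ (2 / p) := by
  have hp0 : 0 < p := by linarith
  intro d
  induction d with
  | zero =>
    intro S a
    have hbox : aBox 0 = Set.univ := by ext θ; simp [aBox]
    have hvol : (volume (Set.univ : Set (Fin 0 → ℝ))).toReal = 1 := by
      simp [volume_pi, Measure.pi_univ]
    have hQc : ∀ θ, Q S a θ = ∑ κ ∈ S, a κ := by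
      intro θ; unfold Q; simp
    rw [hbox]
    simp only [pow_zero, one_mul]
    rw [funext hQc, setIntegral_const, measureReal_def, hvol, one_smul]
    rcases S.eq_empty_or_nonempty with rfl | ⟨κ0, hκ0⟩
    · simp [Real.zero_rpow hp0.ne', Real.rpow_natCast]
      positivity
    · have hsub : Subsingleton (Fin 0 → ℕ) := ⟨fun a b => funext fun i => i.elim0⟩
      have hS : S = {κ0} := Finset.eq_singleton_iff_unique_mem.mpr
        ⟨hκ0, fun x _ => @Subsingleton.elim _ hsub x κ0⟩
      subst hS
      rw [Finset.sum_singleton, Finset.sum_singleton]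
      have h2 : ∏ j : Fin 0, γ (κ0 j) = 1 := by simp
      rw [h2, mul_one, ← Real.rpow_mul (norm_nonneg _)]
      have h3 : p * (2 / p) = 2 := by field_simp
      rw [h3]
      rw [show ((2:ℝ) = ((2:ℕ):ℝ)) by norm_num, Real.rpow_natCast]
  | succ d IH =>
    intro S a
    set q : ℝ := 2 / p with hq
    set r : ℝ := p / 2 with hr
    have hr0 : 0 < r := by rw [hr]; positivity
    have hr1 : r ≤ 1 := by rw [hr]; linarith
    have hq0 : 0 < q := by rw [hq]; positivity
    have hq_eq : q = 1 / r := by rw [hq, hr]; field_simp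
    have hqr : q * r = 1 := by rw [hq, hr]; field_simp
    have hrq : r * q = 1 := by rw [hq, hr]; field_simp
    have h2r : 2 * r = p := by rw [hr]; ring
    -- extend coefficients by zero to a full cube of multi-indices
    set K := S.sup fun κ => Finset.univ.sup κ with hK
    set T := Fintype.piFinset fun _ : Fin (d+1) => range (K+1) with hT
    set A : (Fin (d+1) → ℕ) → ℂ := fun κ => if κ ∈ S then a κ else 0 with hA
    have hST : S ⊆ T := by
      intro κ hκ
      rw [hT, Fintype.mem_piFinset]
      intro j
      rw [Finset.mem_range, Nat.lt_succ_iff, hK]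
      exact le_trans (Finset.le_sup (Finset.mem_univ j)) (Finset.le_sup hκ)
    have hLHS : ∑ κ ∈ S, ‖a κ‖ ^ 2 * ∏ j, γ (κ j)
        = ∑ κ ∈ T, ‖A κ‖ ^ 2 * ∏ j, γ (κ j) := by
      have hc : ∀ κ ∈ S, ‖a κ‖ ^ 2 * ∏ j, γ (κ j) = ‖A κ‖ ^ 2 * ∏ j, γ (κ j) :=
        fun κ hκ => by simp [hA, hκ]
      rw [Finset.sum_congr rfl hc]
      exact Finset.sum_subset hST (fun κ _ hκ => by simp [hA, hκ])
    have hQeq : ∀ θ, Q S a θ = Q T A θ := by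
      intro θ
      unfold Q
      have hc : ∀ κ ∈ S, a κ * ∏ j, Complex.exp (Complex.I * (θ j : ℂ)) ^ κ j
          = A κ * ∏ j, Complex.exp (Complex.I * (θ j : ℂ)) ^ κ j :=
        fun κ hκ => by simp [hA, hκ]
      rw [Finset.sum_congr rfl hc]
      exact Finset.sum_subset hST (fun κ _ hκ => by simp [hA, hκ])
    rw [hLHS, funext fun θ => congrArg (fun z => ‖z‖ ^ p) (hQeq θ)]
    -- now everything in terms of T, A
    set T' := Fintype.piFinset fun _ : Fin d => range (K+1) with hT'
    set f : ℕ → (Fin d → ℝ) → ℂ := fun k => Q T' (fun κ' => A (Fin.cons k κ')) with hf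
    set G : ℕ → (Fin d → ℝ) → ℝ := fun k θ' => γ k * ‖f k θ'‖ ^ 2 with hG
    set F : (Fin d → ℝ) → ℝ := fun θ' => ∑ k ∈ range (K+1), G k θ' with hF
    have hfc : ∀ k, Continuous (f k) := fun k => continuous_Q _ _
    have hGc : ∀ k, Continuous (G k) := fun k =>
      continuous_const.mul ((hfc k).norm.pow 2)
    have hFc : Continuous F := continuous_finset_sum _ fun k _ => (hGc k)
    have hGnn : ∀ k θ', 0 ≤ G k θ' := fun k θ' =>
      mul_nonneg (hγpos k).le (by positivity)
    have hFnn : ∀ θ', 0 ≤ F θ' := fun θ' => Finset.sum_nonneg fun k _ => hGnn k θ'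
    -- key pointwise splitting of the polynomial
    have hsplit : ∀ (t : ℝ) (θ' : Fin d → ℝ), Q T A (Fin.cons t θ') =
        ∑ k ∈ range (K+1), f k θ' * Complex.exp (Complex.I * (t:ℂ)) ^ k := by
      intro t θ'
      unfold Q
      rw [hT, sum_piFinset_succ K d]
      apply Finset.sum_congr rfl
      intro k _
      rw [hf]
      unfold Q
      rw [Finset.sum_mul]
      apply Finset.sum_congr rfl
      intro κ' _
      rw [Fin.prod_univ_succ]
      simp only [Fin.cons_zero, Fin.cons_succ]
      ring
    -- one-variable inequality, pointwise in θ'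
    have h1' : ∀ θ', F θ' ≤ (bc * ∫ t in Set.Ioc (0:ℝ) (2 * Real.pi),
        ‖Q T A (Fin.cons t θ')‖ ^ p) ^ q := by
      intro θ'
      have h := h1 K (fun k => f k θ')
      rw [intervalIntegral.integral_of_le (by positivity)] at h
      have e1 : F θ' = ∑ k ∈ range (K+1), ‖f k θ'‖ ^ 2 * γ k := by
        rw [hF]
        exact Finset.sum_congr rfl fun k _ => by rw [hG, mul_comm]
      rw [e1, funext fun t => congrArg (fun z => ‖z‖ ^ p) (hsplit t θ')]
      exact h
    have h1'' : ∀ θ', F θ' ^ r ≤ bc * ∫ t in Set.Ioc (0:ℝ) (2 * Real.pi),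
        ‖Q T A (Fin.cons t θ')‖ ^ p := by
      intro θ'
      have hInn : 0 ≤ bc * ∫ t in Set.Ioc (0:ℝ) (2 * Real.pi),
          ‖Q T A (Fin.cons t θ')‖ ^ p :=
        mul_nonneg bc_pos.le (integral_nonneg fun t => Real.rpow_nonneg (norm_nonneg _) p)
      calc F θ' ^ r ≤ ((bc * ∫ t in Set.Ioc (0:ℝ) (2 * Real.pi),
            ‖Q T A (Fin.cons t θ')‖ ^ p) ^ q) ^ r :=
            Real.rpow_le_rpow (hFnn θ') (h1' θ') hr0.le
        _ = _ := by rw [← Real.rpow_mul hInn, hqr, Real.rpow_one]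
    -- Fubini setup
    set e := MeasurableEquiv.piFinSuccAbove (fun _ : Fin (d+1) => ℝ) 0 with he
    have hcons : ∀ z : ℝ × (Fin d → ℝ), e.symm z = Fin.cons z.1 z.2 := by
      intro z
      rw [he]
      simp [MeasurableEquiv.piFinSuccAbove_symm_apply, Fin.insertNthEquiv, Fin.insertNth_zero]
    have hpre : e.symm ⁻¹' (aBox (d+1)) =
        (Set.Ioc (0:ℝ) (2 * Real.pi)) ×ˢ aBox d := by
      rw [← preimage_box d, ← Set.preimage_comp]
      ext z
      simp [hcons z]
    have hmp : MeasurePreserving e.symm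
        ((volume : Measure ℝ).prod (volume : Measure (Fin d → ℝ))) volume :=
      (volume_preserving_piFinSuccAbove (fun _ : Fin (d+1) => ℝ) 0).symm
    have hQTAc : Continuous (fun θ => ‖Q T A θ‖ ^ p) :=
      ((continuous_Q T A).norm).rpow_const fun x => Or.inr hp0.le
    have hQint : IntegrableOn (fun θ => ‖Q T A θ‖ ^ p) (aBox (d+1)) :=
      integrableOn_box hQTAc
    -- transfer integral to the product space
    have hIeq : ∫ θ in aBox (d+1), ‖Q T A θ‖ ^ p =
        ∫ z in (Set.Ioc (0:ℝ) (2 * Real.pi)) ×ˢ aBox d,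
          ‖Q T A (Fin.cons z.1 z.2)‖ ^ p ∂((volume : Measure ℝ).prod volume) := by
      have h0 := hmp.setIntegral_preimage_emb (MeasurableEquiv.measurableEmbedding e.symm)
        (fun θ => ‖Q T A θ‖ ^ p) (aBox (d+1))
      rw [hpre] at h0
      rw [← h0]
      apply setIntegral_congr_fun ((measurableSet_Ioc).prod (MeasurableSet.univ_pi
        fun _ => measurableSet_Ioc))
      intro z _
      simp only [hcons z]
    have hggint : Integrable (fun z : ℝ × (Fin d → ℝ) => ‖Q T A (Fin.cons z.1 z.2)‖ ^ p)
        (((volume : Measure ℝ).restrict (Set.Ioc (0:ℝ) (2 * Real.pi))).prod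
          ((volume : Measure (Fin d → ℝ)).restrict (aBox d))) := by
      rw [Measure.prod_restrict]
      have hres := hmp.restrict_preimage_emb
        (MeasurableEquiv.measurableEmbedding e.symm) (aBox (d+1))
      rw [hpre] at hres
      have hint := (hres.integrable_comp_emb
        (MeasurableEquiv.measurableEmbedding e.symm)).mpr hQint
      apply hint.congr
      exact Filter.Eventually.of_forall fun z => by simp [Function.comp, hcons z]
    have hInner : Integrable (fun θ' => ∫ t in Set.Ioc (0:ℝ) (2 * Real.pi),
        ‖Q T A (Fin.cons t θ')‖ ^ p) ((volume : Measure (Fin d → ℝ)).restrict (aBox d)) :=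
      hggint.integral_prod_right
    have hprod : ∫ z in (Set.Ioc (0:ℝ) (2 * Real.pi)) ×ˢ aBox d,
          ‖Q T A (Fin.cons z.1 z.2)‖ ^ p ∂((volume : Measure ℝ).prod volume) =
        ∫ θ' in aBox d, ∫ t in Set.Ioc (0:ℝ) (2 * Real.pi),
          ‖Q T A (Fin.cons t θ')‖ ^ p := by
      rw [← Measure.prod_restrict]
      exact integral_prod_symm _ hggint
    -- integrate the pointwise bound
    have hFr_int : IntegrableOn (fun θ' => F θ' ^ r) (aBox d) :=
      integrableOn_box (hFc.rpow_const fun x => Or.inr hr0.le)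
    have hstep : ∫ θ' in aBox d, F θ' ^ r ≤
        bc * ∫ θ' in aBox d, ∫ t in Set.Ioc (0:ℝ) (2 * Real.pi),
          ‖Q T A (Fin.cons t θ')‖ ^ p := by
      rw [← integral_const_mul]
      exact integral_mono hFr_int (hInner.const_mul bc) fun θ' => h1'' θ'
    -- reverse Minkowski
    have hGint : ∀ k, Integrable (fun θ' => G k θ' ^ r)
        ((volume : Measure (Fin d → ℝ)).restrict (aBox d)) := fun k =>
      integrableOn_box ((hGc k).rpow_const fun x => Or.inr hr0.le)
    have hRM := rev_mink ((volume : Measure (Fin d → ℝ)).restrict (aBox d)) hr0 hr1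
      (K+1) G (fun k θ' => hGnn k θ') hGint (by rw [hF] at hFr_int; exact hFr_int)
    -- per-index identity linking IH to the G functions
    have hkey : ∀ k, γ k * (bc ^ d * ∫ θ' in aBox d, ‖f k θ'‖ ^ p) ^ q =
        (bc ^ d) ^ q * (∫ θ' in aBox d, G k θ' ^ r) ^ q := by
      intro k
      have hInn : 0 ≤ ∫ θ' in aBox d, ‖f k θ'‖ ^ p :=
        integral_nonneg fun θ' => Real.rpow_nonneg (norm_nonneg _) p
      have e1 : ∀ θ', G k θ' ^ r = γ k ^ r * ‖f k θ'‖ ^ p := by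
        intro θ'
        rw [hG, Real.mul_rpow (hγpos k).le (by positivity)]
        congr 1
        rw [← Real.rpow_natCast ‖f k θ'‖ 2, ← Real.rpow_mul (norm_nonneg _)]
        have h22 : ((2:ℕ):ℝ) * r = p := by push_cast; linarith [h2r]
        rw [h22]
      rw [funext e1, integral_const_mul,
        Real.mul_rpow (pow_nonneg bc_pos.le d) hInn,
        Real.mul_rpow (Real.rpow_nonneg (hγpos k).le r) hInn,
        ← Real.rpow_mul (hγpos k).le, hrq, Real.rpow_one]
      ring
    -- chain of inequalities
    have hIH : ∀ k, ∑ κ' ∈ T', ‖A (Fin.cons k κ')‖ ^ 2 * ∏ j, γ (κ' j) ≤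
        (bc ^ d * ∫ θ' in aBox d, ‖f k θ'‖ ^ p) ^ q := fun k =>
      IH T' (fun κ' => A (Fin.cons k κ'))
    have hLHS2 : ∑ κ ∈ T, ‖A κ‖ ^ 2 * ∏ j, γ (κ j) =
        ∑ k ∈ range (K+1), γ k * ∑ κ' ∈ T', ‖A (Fin.cons k κ')‖ ^ 2 * ∏ j, γ (κ' j) := by
      rw [hT, sum_piFinset_succ K d]
      apply Finset.sum_congr rfl
      intro k _
      rw [Finset.mul_sum]
      apply Finset.sum_congr rfl
      intro κ' _
      rw [Fin.prod_univ_succ]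
      simp only [Fin.cons_zero, Fin.cons_succ]
      ring
    rw [hLHS2]
    calc ∑ k ∈ range (K+1), γ k * ∑ κ' ∈ T', ‖A (Fin.cons k κ')‖ ^ 2 * ∏ j, γ (κ' j)
        ≤ ∑ k ∈ range (K+1), γ k * (bc ^ d * ∫ θ' in aBox d, ‖f k θ'‖ ^ p) ^ q :=
          Finset.sum_le_sum fun k _ => mul_le_mul_of_nonneg_left (hIH k) (hγpos k).le
      _ = (bc ^ d) ^ q * ∑ k ∈ range (K+1), (∫ θ' in aBox d, G k θ' ^ r) ^ q := by
          rw [Finset.mul_sum]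
          exact Finset.sum_congr rfl fun k _ => hkey k
      _ ≤ (bc ^ d) ^ q * (∫ θ' in aBox d, F θ' ^ r) ^ q := by
          apply mul_le_mul_of_nonneg_left _
            (Real.rpow_nonneg (pow_nonneg bc_pos.le d) q)
          rw [hq_eq]
          convert hRM using 3 <;> rw [hF]
      _ = (bc ^ d * ∫ θ' in aBox d, F θ' ^ r) ^ q := by
          rw [Real.mul_rpow (pow_nonneg bc_pos.le d)
            (integral_nonneg fun θ' => Real.rpow_nonneg (hFnn θ') r)]
      _ ≤ (bc ^ (d+1) * ∫ θ in aBox (d+1), ‖Q T A θ‖ ^ p) ^ q := by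
          apply Real.rpow_le_rpow (mul_nonneg (pow_nonneg bc_pos.le d)
            (integral_nonneg fun θ' => Real.rpow_nonneg (hFnn θ') r)) _ hq0.le
          rw [hIeq, hprod, pow_succ, mul_assoc]
          exact mul_le_mul_of_nonneg_left hstep (pow_nonneg bc_pos.le d)

end Stmt4Aux

theorem stmt4 (p : ℝ) (hp1 : 1 ≤ p) (hp2 : p ≤ 2) (γ : ℕ → ℝ)
    (hγpos : ∀ k, 0 < γ k) (hγ0 : γ 0 = 1)
    (h1 : ∀ (K : ℕ) (a : ℕ → ℂ),
      ∑ k ∈ Finset.range (K + 1), ‖a k‖ ^ 2 * γ k ≤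
        ((1 / (2 * Real.pi)) * ∫ θ in (0 : ℝ)..(2 * Real.pi),
          ‖∑ k ∈ Finset.range (K + 1), a k * Complex.exp (Complex.I * (θ : ℂ)) ^ k‖ ^ p)
          ^ (2 / p))
    (d : ℕ) (hd : 1 ≤ d) (S : Finset (Fin d → ℕ)) (a : (Fin d → ℕ) → ℂ) :
    ∑ κ ∈ S, ‖a κ‖ ^ 2 * ∏ j, γ (κ j) ≤
      ((1 / (2 * Real.pi)) ^ d *
        ∫ θ in Set.univ.pi (fun _ : Fin d => Set.Ioc (0 : ℝ) (2 * Real.pi)),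
          ‖∑ κ ∈ S, a κ * ∏ j, Complex.exp (Complex.I * (θ j : ℂ)) ^ κ j‖ ^ p)
        ^ (2 / p) := by
  exact Stmt4Aux.main p hp1 hp2 γ hγpos hγ0 h1 d S a
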